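/- (Vector Bernstein corollary) Let v_1,...,v_N be independent random vectors in ℝ^k with ‖v_i - E v_i‖_2 ≤ B almost surely, and let σ² = Σ_i E‖v_i - E v_i‖². Then for any t with 0 ≤ t ≤ σ²/B, P(‖Σ_i (v_i - E v_i)‖_2 > t) ≤ exp(-t²/(8σ²) + 1/4). -/

import Mathlib

set_option maxHeartbeats 1000000
open Real MeasureTheory ProbabilityTheory

lemma sinh_le_mul_cosh {x : ℝ} (hx : 0 ≤ x) : Real.sinh x ≤ x * Real.cosh x := by
  have key : MonotoneOn (fun y => y * Real.cosh y - Real.sinh y) (Set.Ici 0) := by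
    have hd : ∀ y : ℝ, HasDerivAt (fun y => y * Real.cosh y - Real.sinh y)
        (y * Real.sinh y) y := by
      intro y
      have h1 := (hasDerivAt_id y).mul (Real.hasDerivAt_cosh y)
      have h2 := h1.sub (Real.hasDerivAt_sinh y)
      exact h2.congr_deriv (by simp)
    apply monotoneOn_of_deriv_nonneg (convex_Ici 0)
    · exact (Continuous.continuousOn (by continuity))
    · intro y hy
      exact (hd y).differentiableAt.differentiableWithinAt
    · intro y hy
      rw [(hd y).deriv]
      simp only [interior_Ici, Set.mem_Ioi] at hy
      exact mul_nonneg hy.le (Real.sinh_nonneg_iff.2 hy.le)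
  have := key (Set.self_mem_Ici) (Set.mem_Ici.2 hx) hx
  simpa using this

/-- cosh(x+y) ≤ cosh x * exp y for x, y real with y ≥ 0 (and any x). -/
lemma cosh_add_le {x y : ℝ} (hy : 0 ≤ y) : Real.cosh (x + y) ≤ Real.cosh x * Real.exp y := by
  rw [Real.cosh_add]
  have h1 : Real.sinh x ≤ Real.cosh x := (Real.sinh_lt_cosh x).le
  have h2 : 0 ≤ Real.sinh y := Real.sinh_nonneg_iff.2 hy
  have h3 : Real.cosh y + Real.sinh y = Real.exp y := Real.cosh_add_sinh y
  nlinarith [Real.cosh_pos x]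

/-- Core scalar lemma: Taylor-type bound for `θ ↦ cosh (L √(aθ² + bθ + c))`. -/
lemma cosh_quad_bound (L a b c : ℝ) (hL : 0 < L) (ha : 0 < a) (hc : 0 < c)
    (hdisc : b ^ 2 < 4 * a * c) :
    Real.cosh (L * Real.sqrt (a + b + c)) ≤
      Real.cosh (L * Real.sqrt c)
        + (L * b / (2 * Real.sqrt c)) * Real.sinh (L * Real.sqrt c)
        + (Real.exp (L * Real.sqrt a) - 1 - L * Real.sqrt a) * Real.cosh (L * Real.sqrt c) := by
  set q : ℝ → ℝ := fun θ => a * θ ^ 2 + b * θ + c with hq_def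
  have hqpos : ∀ θ, 0 < q θ := by
    intro θ; simp only [hq_def]; nlinarith [sq_nonneg (2 * a * θ + b)]
  set S : ℝ → ℝ := fun θ => Real.sqrt (q θ) with hS_def
  have hSpos : ∀ θ, 0 < S θ := fun θ => Real.sqrt_pos.2 (hqpos θ)
  have hSsq : ∀ θ, S θ ^ 2 = q θ := fun θ => Real.sq_sqrt (hqpos θ).le
  have hsa : (0:ℝ) < Real.sqrt a := Real.sqrt_pos.2 ha
  have hsc : (0:ℝ) < Real.sqrt c := Real.sqrt_pos.2 hc
  set m : ℝ := L * Real.sqrt a with hm_def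
  have hm : 0 < m := mul_pos hL hsa
  set g : ℝ → ℝ := fun θ => Real.cosh (L * S θ) with hg_def
  set g1 : ℝ → ℝ := fun θ => Real.sinh (L * S θ) * (L * ((2 * a * θ + b) / (2 * S θ)))
    with hg1_def
  set K : ℝ := Real.cosh (L * Real.sqrt c) with hK_def
  set h : ℝ → ℝ := fun θ => K + θ * ((L * b / (2 * Real.sqrt c)) * Real.sinh (L * Real.sqrt c))
      + K * (Real.exp (m * θ) - 1 - m * θ) with hh_def
  set h1 : ℝ → ℝ := fun θ => (L * b / (2 * Real.sqrt c)) * Real.sinh (L * Real.sqrt c)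
      + K * (m * Real.exp (m * θ) - m) with hh1_def
  -- derivatives of S
  have hS' : ∀ θ, HasDerivAt S ((2 * a * θ + b) * (1 / (2 * S θ))) θ := by
    intro θ
    have hq' : HasDerivAt q (2 * a * θ + b) θ := by
      have : HasDerivAt (fun θ : ℝ => a * θ ^ 2 + b * θ + c) (a * (2 * θ) + b) θ := by
        exact (((hasDerivAt_pow 2 θ).const_mul a).add ((hasDerivAt_id θ).const_mul b)).add_const c
          |>.congr_deriv (by ring)
      exact this.congr_deriv (by ring)
    have := (Real.hasDerivAt_sqrt (hqpos θ).ne').comp θ hq'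
    simpa [hS_def, mul_comm, Function.comp_def] using this
  have hg' : ∀ θ, HasDerivAt g (g1 θ) θ := by
    intro θ
    have hLS : HasDerivAt (fun θ => L * S θ) (L * ((2 * a * θ + b) * (1 / (2 * S θ)))) θ :=
      (hS' θ).const_mul L
    have := (Real.hasDerivAt_cosh (L * S θ)).comp θ hLS
    exact this.congr_deriv (by simp only [hg1_def]; ring)
  -- derivative of g1
  set E : ℝ → ℝ := fun θ =>
      Real.cosh (L * S θ) * (L * ((2 * a * θ + b) * (1 / (2 * S θ)))) *
          (L * ((2 * a * θ + b) / (2 * S θ)))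
        + Real.sinh (L * S θ) *
          (L * ((2 * a * (2 * S θ) - (2 * a * θ + b) * (2 * ((2 * a * θ + b) * (1 / (2 * S θ)))))
            / (2 * S θ) ^ 2)) with hE_def
  have hg1' : ∀ θ, HasDerivAt g1 (E θ) θ := by
    intro θ
    have hu : HasDerivAt (fun θ => Real.sinh (L * S θ))
        (Real.cosh (L * S θ) * (L * ((2 * a * θ + b) * (1 / (2 * S θ))))) θ := by
      have hLS : HasDerivAt (fun θ => L * S θ) (L * ((2 * a * θ + b) * (1 / (2 * S θ)))) θ :=
        (hS' θ).const_mul L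
      exact (Real.hasDerivAt_sinh (L * S θ)).comp θ hLS
    have hnum : HasDerivAt (fun θ : ℝ => 2 * a * θ + b) (2 * a) θ := by
      simpa using ((hasDerivAt_id θ).const_mul (2 * a)).add_const b
    have hden : HasDerivAt (fun θ => 2 * S θ) (2 * ((2 * a * θ + b) * (1 / (2 * S θ)))) θ :=
      (hS' θ).const_mul 2
    have hr : HasDerivAt (fun θ => (2 * a * θ + b) / (2 * S θ))
        ((2 * a * (2 * S θ) - (2 * a * θ + b) * (2 * ((2 * a * θ + b) * (1 / (2 * S θ)))))
          / (2 * S θ) ^ 2) θ :=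
      hnum.div hden (mul_pos two_pos (hSpos θ)).ne'
    have := hu.mul (hr.const_mul L)
    exact this.congr_deriv (by simp only [hE_def])
  -- derivative of h and h1
  have hexp : ∀ θ : ℝ, HasDerivAt (fun θ => Real.exp (m * θ)) (m * Real.exp (m * θ)) θ := by
    intro θ
    have hmθ : HasDerivAt (fun θ : ℝ => m * θ) m θ := by
      simpa using (hasDerivAt_id θ).const_mul m
    exact ((Real.hasDerivAt_exp (m * θ)).comp θ hmθ).congr_deriv (by ring)
  have hh' : ∀ θ, HasDerivAt h (h1 θ) θ := by
    intro θ
    have t1 : HasDerivAt (fun θ : ℝ => K + θ * ((L * b / (2 * Real.sqrt c)) *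
        Real.sinh (L * Real.sqrt c)))
        ((L * b / (2 * Real.sqrt c)) * Real.sinh (L * Real.sqrt c)) θ := by
      simpa using (((hasDerivAt_id θ).mul_const ((L * b / (2 * Real.sqrt c)) *
        Real.sinh (L * Real.sqrt c))).const_add K)
    have t2 : HasDerivAt (fun θ => K * (Real.exp (m * θ) - 1 - m * θ))
        (K * (m * Real.exp (m * θ) - m)) θ := by
      have hmθ : HasDerivAt (fun θ : ℝ => m * θ) m θ := by
        simpa using (hasDerivAt_id θ).const_mul m
      have := (((hexp θ).sub_const 1).sub hmθ).const_mul K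
      exact this.congr_deriv (by ring)
    exact (t1.add t2).congr_deriv (by simp only [hh1_def])
  have hh1' : ∀ θ, HasDerivAt h1 (K * (m ^ 2 * Real.exp (m * θ))) θ := by
    intro θ
    have t2 : HasDerivAt (fun θ => K * (m * Real.exp (m * θ) - m))
        (K * (m ^ 2 * Real.exp (m * θ))) θ := by
      have := (((hexp θ).const_mul m).sub_const m).const_mul K
      exact this.congr_deriv (by ring)
    exact (t2.const_add _).congr_deriv rfl
  -- the key pointwise second-derivative bound
  have hm2 : m ^ 2 = L ^ 2 * a := by
    rw [hm_def, mul_pow, Real.sq_sqrt ha.le]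
  have hEbound : ∀ θ : ℝ, 0 ≤ θ → E θ ≤ K * (m ^ 2 * Real.exp (m * θ)) := by
    intro θ hθ
    have hs := hSpos θ
    have hq := hqpos θ
    have hsq := hSsq θ
    have hP : (2 * a * θ + b) ^ 2 ≤ 4 * a * q θ := by
      simp only [hq_def]; nlinarith
    -- cosh(L * S θ) ≤ K * exp (m * θ)
    have hb2 : b ≤ 2 * (Real.sqrt a * Real.sqrt c) := by
      nlinarith [Real.sq_sqrt ha.le, Real.sq_sqrt hc.le, mul_pos hsa hsc,
        sq_nonneg (b - 2 * (Real.sqrt a * Real.sqrt c))]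
    have hSle : S θ ≤ Real.sqrt c + Real.sqrt a * θ := by
      have h1 : q θ ≤ (Real.sqrt c + Real.sqrt a * θ) ^ 2 := by
        have := Real.sq_sqrt ha.le
        have := Real.sq_sqrt hc.le
        simp only [hq_def]; nlinarith
      calc S θ ≤ Real.sqrt ((Real.sqrt c + Real.sqrt a * θ) ^ 2) := Real.sqrt_le_sqrt h1
        _ = Real.sqrt c + Real.sqrt a * θ := Real.sqrt_sq (by positivity)
    have hcosh_le : Real.cosh (L * S θ) ≤ K * Real.exp (m * θ) := by
      have h1 : Real.cosh (L * S θ) ≤ Real.cosh (L * Real.sqrt c + m * θ) := by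
        apply Real.cosh_le_cosh.2
        rw [abs_of_nonneg (by positivity), abs_of_nonneg (by positivity)]
        calc L * S θ ≤ L * (Real.sqrt c + Real.sqrt a * θ) := by
              exact mul_le_mul_of_nonneg_left hSle hL.le
          _ = L * Real.sqrt c + m * θ := by rw [hm_def]; ring
      exact h1.trans (cosh_add_le (by positivity))
    -- sinh bound
    have hsinh : Real.sinh (L * S θ) ≤ (L * S θ) * Real.cosh (L * S θ) :=
      sinh_le_mul_cosh (by positivity)
    -- rewrite E θ
    have hE : E θ = Real.cosh (L * S θ) * (L ^ 2 * ((2 * a * θ + b) ^ 2 / (4 * q θ)))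
        + Real.sinh (L * S θ) * (L * ((4 * a * q θ - (2 * a * θ + b) ^ 2) / (4 * q θ * S θ))) := by
      simp only [hE_def]
      rw [← hsq]
      field_simp
      ring
    rw [hE, hm2]
    have hcoshpos : 0 < Real.cosh (L * S θ) := Real.cosh_pos _
    have hterm2 : Real.sinh (L * S θ) *
        (L * ((4 * a * q θ - (2 * a * θ + b) ^ 2) / (4 * q θ * S θ)))
        ≤ Real.cosh (L * S θ) * (L ^ 2 * ((4 * a * q θ - (2 * a * θ + b) ^ 2) / (4 * q θ))) := by
      have hfac : 0 ≤ L * ((4 * a * q θ - (2 * a * θ + b) ^ 2) / (4 * q θ * S θ)) := by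
        apply mul_nonneg hL.le
        apply div_nonneg (by linarith) (by positivity)
      calc Real.sinh (L * S θ) * (L * ((4 * a * q θ - (2 * a * θ + b) ^ 2) / (4 * q θ * S θ)))
          ≤ ((L * S θ) * Real.cosh (L * S θ)) *
            (L * ((4 * a * q θ - (2 * a * θ + b) ^ 2) / (4 * q θ * S θ))) := by
            exact mul_le_mul_of_nonneg_right hsinh hfac
        _ = Real.cosh (L * S θ) * (L ^ 2 * ((4 * a * q θ - (2 * a * θ + b) ^ 2) / (4 * q θ))) := by
            field_simp
    have hsum : Real.cosh (L * S θ) * (L ^ 2 * ((2 * a * θ + b) ^ 2 / (4 * q θ)))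
        + Real.cosh (L * S θ) * (L ^ 2 * ((4 * a * q θ - (2 * a * θ + b) ^ 2) / (4 * q θ)))
        = Real.cosh (L * S θ) * (L ^ 2 * a) := by
      field_simp
      ring
    have : Real.cosh (L * S θ) * (L ^ 2 * a) ≤ K * (L ^ 2 * a * Real.exp (m * θ)) := by
      have := mul_le_mul_of_nonneg_right hcosh_le (by positivity : (0:ℝ) ≤ L ^ 2 * a)
      calc Real.cosh (L * S θ) * (L ^ 2 * a) ≤ K * Real.exp (m * θ) * (L ^ 2 * a) := this
        _ = K * (L ^ 2 * a * Real.exp (m * θ)) := by ring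
    linarith
  -- monotonicity of h1 - g1 on [0, 1]
  have hS0 : S 0 = Real.sqrt c := by simp [hS_def, hq_def]
  have hd1_zero : h1 0 - g1 0 = 0 := by
    simp only [hh1_def, hg1_def, hS0, mul_zero, zero_add]
    rw [Real.exp_zero]
    field_simp
    ring
  have key1 : ∀ θ, θ ∈ Set.Icc (0:ℝ) 1 → 0 ≤ h1 θ - g1 θ := by
    have hmono : MonotoneOn (fun θ => h1 θ - g1 θ) (Set.Icc (0:ℝ) 1) := by
      apply monotoneOn_of_deriv_nonneg (convex_Icc 0 1)
      · exact (Differentiable.continuous (fun θ => ((hh1' θ).sub (hg1' θ)).differentiableAt)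
          |>.continuousOn)
      · intro θ _
        exact ((hh1' θ).sub (hg1' θ)).differentiableAt.differentiableWithinAt
      · intro θ hθ
        rw [interior_Icc, Set.mem_Ioo] at hθ
        rw [HasDerivAt.deriv (f := fun θ => h1 θ - g1 θ) ((hh1' θ).sub (hg1' θ))]
        have := hEbound θ hθ.1.le
        linarith
    intro θ hθ
    have h0 := hmono (Set.left_mem_Icc.2 zero_le_one) hθ hθ.1
    simp only at h0
    linarith
  -- monotonicity of h - g on [0, 1]
  have hd_zero : h 0 - g 0 = 0 := by
    simp only [hh_def, hg_def, hS0, mul_zero, zero_mul, zero_add, add_zero]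
    rw [Real.exp_zero]
    ring
  have key2 : g 1 ≤ h 1 := by
    have hmono : MonotoneOn (fun θ => h θ - g θ) (Set.Icc (0:ℝ) 1) := by
      apply monotoneOn_of_deriv_nonneg (convex_Icc 0 1)
      · exact (Differentiable.continuous (fun θ => ((hh' θ).sub (hg' θ)).differentiableAt)
          |>.continuousOn)
      · intro θ _
        exact ((hh' θ).sub (hg' θ)).differentiableAt.differentiableWithinAt
      · intro θ hθ
        rw [interior_Icc, Set.mem_Ioo] at hθ
        rw [HasDerivAt.deriv (f := fun θ => h θ - g θ) ((hh' θ).sub (hg' θ))]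
        exact key1 θ ⟨hθ.1.le, hθ.2.le⟩
    have h0 := hmono (Set.left_mem_Icc.2 zero_le_one) (Set.right_mem_Icc.2 zero_le_one) zero_le_one
    simp only at h0
    linarith
  -- conclude
  have hq1 : q 1 = a + b + c := by simp [hq_def]
  have hg1eq : g 1 = Real.cosh (L * Real.sqrt (a + b + c)) := by
    simp only [hg_def, hS_def, hq1]
  have hh1eq : h 1 = Real.cosh (L * Real.sqrt c)
        + (L * b / (2 * Real.sqrt c)) * Real.sinh (L * Real.sqrt c)
        + (Real.exp (L * Real.sqrt a) - 1 - L * Real.sqrt a) * Real.cosh (L * Real.sqrt c) := by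
    simp only [hh_def, hK_def, hm_def]
    ring
  rw [← hg1eq, ← hh1eq]
  exact key2

/-- Pointwise vector lemma: second-order bound for `cosh (L‖s + x‖)`. -/
lemma cosh_norm_add_le {E : Type*} [NormedAddCommGroup E] [InnerProductSpace ℝ E]
    {L : ℝ} (hL : 0 ≤ L) (s x : E) :
    Real.cosh (L * ‖s + x‖) ≤
      Real.cosh (L * ‖s‖) + (L * (inner ℝ s x : ℝ) / ‖s‖) * Real.sinh (L * ‖s‖)
        + (Real.exp (L * ‖x‖) - 1 - L * ‖x‖) * Real.cosh (L * ‖s‖) := by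
  rcases eq_or_lt_of_le hL with rfl | hLpos
  · simp
  rcases eq_or_ne x 0 with rfl | hx
  · simp
  rcases eq_or_ne s 0 with rfl | hs
  · simp only [zero_add, norm_zero, mul_zero, Real.cosh_zero, inner_zero_left, mul_zero,
      zero_mul, zero_div, Real.sinh_zero, mul_one, add_zero, zero_mul]
    have hu : 0 ≤ L * ‖x‖ := by positivity
    have hsinh : L * ‖x‖ ≤ Real.sinh (L * ‖x‖) := by
      rcases eq_or_lt_of_le hu with h | h
      · rw [← h]; simp
      · exact (Real.self_lt_sinh_iff.2 h).le
    have := Real.cosh_add_sinh (L * ‖x‖)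
    nlinarith
  -- main case
  set a : ℝ := ‖x‖ ^ 2 with ha_def
  set b : ℝ := 2 * (inner ℝ s x : ℝ) with hb_def
  set c : ℝ := ‖s‖ ^ 2 with hc_def
  have ha : 0 < a := by
    have : ‖x‖ ≠ 0 := norm_ne_zero_iff.2 hx
    simp only [ha_def]; positivity
  have hc : 0 < c := by
    have : ‖s‖ ≠ 0 := norm_ne_zero_iff.2 hs
    simp only [hc_def]; positivity
  have hdisc : b ^ 2 ≤ 4 * a * c := by
    have h2 := abs_real_inner_le_norm s x
    simp only [hb_def, ha_def, hc_def]
    nlinarith [abs_nonneg (inner ℝ s x : ℝ), sq_abs (inner ℝ s x : ℝ)]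
  have hsa : Real.sqrt a = ‖x‖ := Real.sqrt_sq (norm_nonneg x)
  have hsc : Real.sqrt c = ‖s‖ := Real.sqrt_sq (norm_nonneg s)
  have habc : a + b + c = ‖s + x‖ ^ 2 := by
    rw [ha_def, hb_def, hc_def, norm_add_sq_real s x]; ring
  set F : ℝ → ℝ := fun ε =>
    Real.cosh (L * Real.sqrt (c + ε))
      + (L * b / (2 * Real.sqrt (c + ε))) * Real.sinh (L * Real.sqrt (c + ε))
      + (Real.exp (L * Real.sqrt a) - 1 - L * Real.sqrt a) * Real.cosh (L * Real.sqrt (c + ε))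
    with hF_def
  have hmain : ∀ ε : ℝ, 0 < ε → Real.cosh (L * ‖s + x‖) ≤ F ε := by
    intro ε hε
    have hdisc' : b ^ 2 < 4 * a * (c + ε) := by nlinarith
    have h := cosh_quad_bound L a b (c + ε) hLpos ha (by linarith) hdisc'
    have h1 : Real.cosh (L * ‖s + x‖) ≤ Real.cosh (L * Real.sqrt (a + b + (c + ε))) := by
      rw [Real.cosh_le_cosh, abs_of_nonneg (by positivity), abs_of_nonneg (by positivity)]
      apply mul_le_mul_of_nonneg_left _ hL
      have : ‖s + x‖ = Real.sqrt (a + b + c) := by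
        rw [habc, Real.sqrt_sq (norm_nonneg _)]
      rw [this]
      apply Real.sqrt_le_sqrt; linarith
    exact h1.trans (by rw [hF_def]; convert h using 3 <;> ring)
  have hcont : ContinuousAt F 0 := by
    have hu : ContinuousAt (fun ε : ℝ => Real.sqrt (c + ε)) 0 :=
      (Real.continuous_sqrt.comp (continuous_const.add continuous_id)).continuousAt
    have hLu : ContinuousAt (fun ε : ℝ => L * Real.sqrt (c + ε)) 0 :=
      continuousAt_const.mul hu
    have hden : (2 : ℝ) * Real.sqrt (c + 0) ≠ 0 := by
      simp only [add_zero]; positivity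
    exact ((Real.continuous_cosh.continuousAt.comp hLu).add
      (((continuousAt_const.div (continuousAt_const.mul hu) hden)).mul
        (Real.continuous_sinh.continuousAt.comp hLu))).add
      (continuousAt_const.mul (Real.continuous_cosh.continuousAt.comp hLu))
  have hlim : Filter.Tendsto F (nhdsWithin 0 (Set.Ioi 0)) (nhds (F 0)) :=
    hcont.continuousWithinAt.tendsto
  have hle : Real.cosh (L * ‖s + x‖) ≤ F 0 := by
    apply ge_of_tendsto hlim
    filter_upwards [self_mem_nhdsWithin] with ε hε
    exact hmain ε hε
  calc Real.cosh (L * ‖s + x‖) ≤ F 0 := hle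
    _ = Real.cosh (L * ‖s‖) + (L * (inner ℝ s x : ℝ) / ‖s‖) * Real.sinh (L * ‖s‖)
        + (Real.exp (L * ‖x‖) - 1 - L * ‖x‖) * Real.cosh (L * ‖s‖) := by
      rw [hF_def]
      simp only [add_zero, hsc, hsa, hb_def]
      have hns : ‖s‖ ≠ 0 := norm_ne_zero_iff.2 hs
      field_simp

/-- One-step expectation bound. -/
lemma step_bound {k : ℕ} (ν : Measure (EuclideanSpace ℝ (Fin k))) [IsProbabilityMeasure ν]
    {B L : ℝ} (hL : 0 ≤ L) (hLB : L * B ≤ 1) (hB : 0 ≤ B)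
    (hbound : ∀ᵐ x ∂ν, ‖x‖ ≤ B)
    (hmean : ∫ x, x ∂ν = 0)
    (t : EuclideanSpace ℝ (Fin k)) :
    ∫ x, Real.cosh (L * ‖t + x‖) ∂ν ≤
      Real.cosh (L * ‖t‖) * Real.exp (3 / 4 * L ^ 2 * ∫ x, ‖x‖ ^ 2 ∂ν) := by
  set V : ℝ := ∫ x, ‖x‖ ^ 2 ∂ν with hV_def
  have hVnn : 0 ≤ V := integral_nonneg (fun x => by positivity)
  -- integrability facts
  have hid : Integrable (fun x : EuclideanSpace ℝ (Fin k) => x) ν := by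
    refine ⟨continuous_id.aestronglyMeasurable, ?_⟩
    exact HasFiniteIntegral.of_bounded hbound
  have h1 : Integrable (fun x : EuclideanSpace ℝ (Fin k) => Real.cosh (L * ‖t + x‖)) ν := by
    refine ⟨(Real.continuous_cosh.comp
      ((continuous_const.mul ((continuous_const.add continuous_id).norm)))).aestronglyMeasurable,
      ?_⟩
    apply HasFiniteIntegral.of_bounded (C := Real.cosh (L * (‖t‖ + B)))
    filter_upwards [hbound] with x hx
    rw [Real.norm_eq_abs, abs_of_pos (Real.cosh_pos _)]
    apply Real.cosh_le_cosh.2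
    rw [abs_of_nonneg (by positivity), abs_of_nonneg (by positivity)]
    apply mul_le_mul_of_nonneg_left _ hL
    calc ‖t + x‖ ≤ ‖t‖ + ‖x‖ := norm_add_le _ _
      _ ≤ ‖t‖ + B := by linarith
  have h2 : Integrable (fun x : EuclideanSpace ℝ (Fin k) => (inner ℝ t x : ℝ)) ν := by
    refine ⟨(continuous_const.inner continuous_id).aestronglyMeasurable, ?_⟩
    apply HasFiniteIntegral.of_bounded (C := ‖t‖ * B)
    filter_upwards [hbound] with x hx
    rw [Real.norm_eq_abs]
    calc |(inner ℝ t x : ℝ)| ≤ ‖t‖ * ‖x‖ := abs_real_inner_le_norm t x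
      _ ≤ ‖t‖ * B := by
        exact mul_le_mul_of_nonneg_left hx (norm_nonneg t)
  have h3 : Integrable (fun x : EuclideanSpace ℝ (Fin k) => ‖x‖ ^ 2) ν := by
    refine ⟨(continuous_norm.pow 2).aestronglyMeasurable, ?_⟩
    apply HasFiniteIntegral.of_bounded (C := B ^ 2)
    filter_upwards [hbound] with x hx
    rw [Real.norm_eq_abs, abs_of_nonneg (by positivity)]
    exact pow_le_pow_left₀ (norm_nonneg x) hx 2
  -- pointwise bound a.e.
  have hae : ∀ᵐ x ∂ν, Real.cosh (L * ‖t + x‖) ≤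
      Real.cosh (L * ‖t‖) + (L * Real.sinh (L * ‖t‖) / ‖t‖) * (inner ℝ t x : ℝ)
        + (3 / 4 * L ^ 2 * Real.cosh (L * ‖t‖)) * ‖x‖ ^ 2 := by
    filter_upwards [hbound] with x hx
    have hP := cosh_norm_add_le hL t x
    have hu : 0 ≤ L * ‖x‖ := by positivity
    have hu1 : L * ‖x‖ ≤ 1 := by
      calc L * ‖x‖ ≤ L * B := mul_le_mul_of_nonneg_left hx hL
        _ ≤ 1 := hLB
    have hexp : Real.exp (L * ‖x‖) - 1 - L * ‖x‖ ≤ 3 / 4 * (L * ‖x‖) ^ 2 := by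
      have hb := Real.exp_bound (x := L * ‖x‖) (by rw [abs_of_nonneg hu]; exact hu1)
        (n := 2) (by norm_num)
      rw [abs_of_nonneg hu] at hb
      have hsum : ∑ m ∈ Finset.range 2, (L * ‖x‖) ^ m / m.factorial = 1 + L * ‖x‖ := by
        simp [Finset.sum_range_succ]
      rw [hsum] at hb
      have := (abs_le.1 hb).2
      norm_num at this ⊢
      linarith
    have hcosh_pos := Real.cosh_pos (L * ‖t‖)
    have hmid : L * (inner ℝ t x : ℝ) / ‖t‖ * Real.sinh (L * ‖t‖)
        = L * Real.sinh (L * ‖t‖) / ‖t‖ * (inner ℝ t x : ℝ) := by ring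
    rw [hmid] at hP
    have h4 : (Real.exp (L * ‖x‖) - 1 - L * ‖x‖) * Real.cosh (L * ‖t‖)
        ≤ 3 / 4 * L ^ 2 * Real.cosh (L * ‖t‖) * ‖x‖ ^ 2 := by
      have := mul_le_mul_of_nonneg_right hexp hcosh_pos.le
      calc (Real.exp (L * ‖x‖) - 1 - L * ‖x‖) * Real.cosh (L * ‖t‖)
          ≤ 3 / 4 * (L * ‖x‖) ^ 2 * Real.cosh (L * ‖t‖) := this
        _ = 3 / 4 * L ^ 2 * Real.cosh (L * ‖t‖) * ‖x‖ ^ 2 := by ring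
    linarith
  -- integrate
  have hRHSint : Integrable (fun x : EuclideanSpace ℝ (Fin k) =>
      Real.cosh (L * ‖t‖) + (L * Real.sinh (L * ‖t‖) / ‖t‖) * (inner ℝ t x : ℝ)
        + (3 / 4 * L ^ 2 * Real.cosh (L * ‖t‖)) * ‖x‖ ^ 2) ν :=
    ((integrable_const _).add (h2.const_mul _)).add (h3.const_mul _)
  have hint_le := integral_mono_ae h1 hRHSint hae
  have hinner : ∫ x, (inner ℝ t x : ℝ) ∂ν = 0 := by
    rw [integral_inner hid, hmean, inner_zero_right]
  have hcalc : ∫ x, (Real.cosh (L * ‖t‖) + (L * Real.sinh (L * ‖t‖) / ‖t‖) * (inner ℝ t x : ℝ)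
      + (3 / 4 * L ^ 2 * Real.cosh (L * ‖t‖)) * ‖x‖ ^ 2) ∂ν
      = Real.cosh (L * ‖t‖) * (1 + 3 / 4 * L ^ 2 * V) := by
    have ia : Integrable (fun x : EuclideanSpace ℝ (Fin k) =>
        Real.cosh (L * ‖t‖) + L * Real.sinh (L * ‖t‖) / ‖t‖ * (inner ℝ t x : ℝ)) ν :=
      (integrable_const _).add (h2.const_mul _)
    have ib : Integrable (fun x : EuclideanSpace ℝ (Fin k) => Real.cosh (L * ‖t‖)) ν :=
      integrable_const _
    rw [integral_add ia (h3.const_mul _), integral_add ib (h2.const_mul _),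
      integral_const, integral_const_mul, integral_const_mul, hinner, ← hV_def]
    simp [measure_univ]
    ring
  rw [hcalc] at hint_le
  calc ∫ x, Real.cosh (L * ‖t + x‖) ∂ν ≤ Real.cosh (L * ‖t‖) * (1 + 3 / 4 * L ^ 2 * V) :=
        hint_le
    _ ≤ Real.cosh (L * ‖t‖) * Real.exp (3 / 4 * L ^ 2 * V) := by
        apply mul_le_mul_of_nonneg_left _ (Real.cosh_pos _).le
        have := Real.add_one_le_exp (3 / 4 * L ^ 2 * V)
        linarith

lemma mgf_sum_bound {Ω : Type*} [MeasurableSpace Ω] (μ : Measure Ω) [IsProbabilityMeasure μ]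
    {N k : ℕ} (X : Fin N → Ω → EuclideanSpace ℝ (Fin k))
    (hmeas : ∀ i, Measurable (X i))
    (hindep : iIndepFun X μ)
    {B L : ℝ} (hB : 0 ≤ B) (hL : 0 ≤ L) (hLB : L * B ≤ 1)
    (hbound : ∀ i, ∀ᵐ ω ∂μ, ‖X i ω‖ ≤ B)
    (hmean : ∀ i, ∫ ω, X i ω ∂μ = 0)
    (s : Finset (Fin N)) :
    ∫ ω, Real.cosh (L * ‖∑ i ∈ s, X i ω‖) ∂μ ≤
      Real.exp (3 / 4 * L ^ 2 * ∑ i ∈ s, ∫ ω, ‖X i ω‖ ^ 2 ∂μ) := by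
  classical
  induction s using Finset.induction_on with
  | empty => simp
  | @insert j u hj IH =>
    set T : Ω → EuclideanSpace ℝ (Fin k) := fun ω => ∑ i ∈ u, X i ω with hT_def
    have hTmeas : Measurable T := by
      apply Finset.measurable_sum
      exact fun i _ => hmeas i
    -- bound on ‖T‖
    have hTbound : ∀ᵐ ω ∂μ, ‖T ω‖ ≤ u.card * B := by
      have : ∀ᵐ ω ∂μ, ∀ i ∈ u, ‖X i ω‖ ≤ B :=
        (ae_ball_iff u.countable_toSet).2 (fun i _ => hbound i)
      filter_upwards [this] with ω hω
      calc ‖T ω‖ ≤ ∑ i ∈ u, ‖X i ω‖ := norm_sum_le _ _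
        _ ≤ ∑ _i ∈ u, B := Finset.sum_le_sum hω
        _ = u.card * B := by simp [Finset.sum_const, nsmul_eq_mul]
    -- independence
    have hTind : IndepFun T (X j) μ := by
      have := hindep.indepFun_finsetSum_of_notMem hmeas hj
      have heq : (∑ i ∈ u, X i) = T := by
        funext ω; simp [hT_def, Finset.sum_apply]
      rwa [heq] at this
    have hpair : Measurable fun ω => (T ω, X j ω) := hTmeas.prodMk (hmeas j)
    have hmap : μ.map (fun ω => (T ω, X j ω)) = (μ.map T).prod (μ.map (X j)) :=
      (indepFun_iff_map_prod_eq_prod_map_map hTmeas.aemeasurable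
        (hmeas j).aemeasurable).1 hTind
    -- probability measures
    have i1 : IsProbabilityMeasure (μ.map T) := Measure.isProbabilityMeasure_map hTmeas.aemeasurable
    have i2 : IsProbabilityMeasure (μ.map (X j)) := Measure.isProbabilityMeasure_map (hmeas j).aemeasurable
    -- the function on the product space
    set f : EuclideanSpace ℝ (Fin k) × EuclideanSpace ℝ (Fin k) → ℝ :=
      fun p => Real.cosh (L * ‖p.1 + p.2‖) with hf_def
    have hfcont : Continuous f := by
      apply Real.continuous_cosh.comp
      exact continuous_const.mul ((continuous_fst.add continuous_snd).norm)
    -- integrability of f on the product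
    have hfint : Integrable f ((μ.map T).prod (μ.map (X j))) := by
      refine ⟨hfcont.aestronglyMeasurable, ?_⟩
      apply HasFiniteIntegral.of_bounded (C := Real.cosh (L * (u.card * B + B)))
      rw [← hmap]
      rw [ae_map_iff hpair.aemeasurable]
      · filter_upwards [hTbound, hbound j] with ω h1 h2
        simp only [hf_def, Set.mem_setOf_eq]
        rw [Real.norm_eq_abs, abs_of_pos (Real.cosh_pos _)]
        apply Real.cosh_le_cosh.2
        rw [abs_of_nonneg (by positivity), abs_of_nonneg (by positivity)]
        apply mul_le_mul_of_nonneg_left _ hL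
        calc ‖T ω + X j ω‖ ≤ ‖T ω‖ + ‖X j ω‖ := norm_add_le _ _
          _ ≤ u.card * B + B := add_le_add h1 h2
      · have : IsClosed {y : ℝ | ‖y‖ ≤ Real.cosh (L * (u.card * B + B))} :=
          isClosed_le continuous_norm continuous_const
        exact (this.preimage hfcont).measurableSet
    -- rewrite the integral
    have hsum_eq : ∀ ω, ∑ i ∈ insert j u, X i ω = T ω + X j ω := by
      intro ω
      rw [Finset.sum_insert hj]
      rw [add_comm]
    have key : ∫ ω, Real.cosh (L * ‖∑ i ∈ insert j u, X i ω‖) ∂μ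
        = ∫ p, f p ∂((μ.map T).prod (μ.map (X j))) := by
      rw [← hmap, integral_map hpair.aemeasurable hfcont.aestronglyMeasurable]
      simp only [hf_def]
      congr 1
      funext ω
      rw [hsum_eq ω]
    rw [key, integral_prod f hfint]
    -- bound the inner integral for each t
    have hmean_j : ∫ x, x ∂(μ.map (X j)) = 0 := by
      rw [integral_map (f := fun x : EuclideanSpace ℝ (Fin k) => x) (hmeas j).aemeasurable
        continuous_id.aestronglyMeasurable]
      exact hmean j
    have hbound_j : ∀ᵐ x ∂(μ.map (X j)), ‖x‖ ≤ B := by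
      rw [ae_map_iff (hmeas j).aemeasurable]
      · exact hbound j
      · have : IsClosed {y : EuclideanSpace ℝ (Fin k) | ‖y‖ ≤ B} :=
          isClosed_le continuous_norm continuous_const
        exact this.measurableSet
    have hVj : ∫ x, ‖x‖ ^ 2 ∂(μ.map (X j)) = ∫ ω, ‖X j ω‖ ^ 2 ∂μ := by
      rw [integral_map (f := fun x : EuclideanSpace ℝ (Fin k) => ‖x‖ ^ 2) (hmeas j).aemeasurable
        ((continuous_norm.pow 2).aestronglyMeasurable)]
    have hinner_step : ∀ t, ∫ x, Real.cosh (L * ‖t + x‖) ∂(μ.map (X j)) ≤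
        Real.cosh (L * ‖t‖) * Real.exp (3 / 4 * L ^ 2 * ∫ ω, ‖X j ω‖ ^ 2 ∂μ) := by
      intro t
      have := step_bound (μ.map (X j)) hL hLB hB hbound_j hmean_j t
      rwa [hVj] at this
    -- integrate the outer variable
    have houter1 : Integrable (fun t => ∫ x, f (t, x) ∂(μ.map (X j))) (μ.map T) :=
      hfint.integral_prod_left
    have houter2 : Integrable (fun t : EuclideanSpace ℝ (Fin k) =>
        Real.cosh (L * ‖t‖) * Real.exp (3 / 4 * L ^ 2 * ∫ ω, ‖X j ω‖ ^ 2 ∂μ)) (μ.map T) := by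
      refine ⟨((Real.continuous_cosh.comp
        (continuous_const.mul continuous_norm)).mul continuous_const).aestronglyMeasurable, ?_⟩
      apply HasFiniteIntegral.of_bounded
        (C := Real.cosh (L * (u.card * B)) * Real.exp (3 / 4 * L ^ 2 * ∫ ω, ‖X j ω‖ ^ 2 ∂μ))
      rw [ae_map_iff hTmeas.aemeasurable]
      · filter_upwards [hTbound] with ω h1
        simp only [Set.mem_setOf_eq, Real.norm_eq_abs]
        rw [abs_of_pos (mul_pos (Real.cosh_pos _) (Real.exp_pos _))]
        apply mul_le_mul_of_nonneg_right _ (Real.exp_pos _).le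
        apply Real.cosh_le_cosh.2
        rw [abs_of_nonneg (by positivity), abs_of_nonneg (by positivity)]
        exact mul_le_mul_of_nonneg_left h1 hL
      · have : IsClosed {y : EuclideanSpace ℝ (Fin k) | ‖Real.cosh (L * ‖y‖) *
            Real.exp (3 / 4 * L ^ 2 * ∫ ω, ‖X j ω‖ ^ 2 ∂μ)‖ ≤ Real.cosh (L * (u.card * B)) *
            Real.exp (3 / 4 * L ^ 2 * ∫ ω, ‖X j ω‖ ^ 2 ∂μ)} := by
          apply isClosed_le _ continuous_const
          exact ((Real.continuous_cosh.comp
            (continuous_const.mul continuous_norm)).mul continuous_const).norm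
        exact this.measurableSet
    have hmono := integral_mono houter1 houter2 (fun t => hinner_step t)
    -- IH applied to ∫ cosh(L‖T‖) over μ.map T
    have hIH' : ∫ t, Real.cosh (L * ‖t‖) ∂(μ.map T) ≤
        Real.exp (3 / 4 * L ^ 2 * ∑ i ∈ u, ∫ ω, ‖X i ω‖ ^ 2 ∂μ) := by
      rw [integral_map (f := fun t : EuclideanSpace ℝ (Fin k) => Real.cosh (L * ‖t‖))
        hTmeas.aemeasurable
        (Continuous.aestronglyMeasurable (by fun_prop))]
      exact IH
    calc ∫ t, ∫ x, f (t, x) ∂(μ.map (X j)) ∂(μ.map T)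
        ≤ ∫ t, Real.cosh (L * ‖t‖) *
            Real.exp (3 / 4 * L ^ 2 * ∫ ω, ‖X j ω‖ ^ 2 ∂μ) ∂(μ.map T) := hmono
      _ = (∫ t, Real.cosh (L * ‖t‖) ∂(μ.map T)) *
            Real.exp (3 / 4 * L ^ 2 * ∫ ω, ‖X j ω‖ ^ 2 ∂μ) := by
          rw [integral_mul_const]
      _ ≤ Real.exp (3 / 4 * L ^ 2 * ∑ i ∈ u, ∫ ω, ‖X i ω‖ ^ 2 ∂μ) *
            Real.exp (3 / 4 * L ^ 2 * ∫ ω, ‖X j ω‖ ^ 2 ∂μ) := by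
          exact mul_le_mul_of_nonneg_right hIH' (Real.exp_pos _).le
      _ = Real.exp (3 / 4 * L ^ 2 * ∑ i ∈ insert j u, ∫ ω, ‖X i ω‖ ^ 2 ∂μ) := by
          rw [← Real.exp_add, Finset.sum_insert hj]
          congr 1
          ring

/-- numeric: 2 ≤ e^{7/10} -/
lemma two_le_exp_seven_tenths : (2:ℝ) ≤ Real.exp (7/10) := by
  have h := Real.sum_le_exp_of_nonneg (x := (7/10:ℝ)) (by norm_num) 4
  have : ∑ i ∈ Finset.range 4, ((7:ℝ)/10) ^ i / i.factorial = 12013/6000 := by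
    simp [Finset.sum_range_succ, Nat.factorial]
    norm_num
  rw [this] at h
  linarith

lemma exp_two_lt : Real.exp (2:ℝ) < 7.389057 := by
  have h := Real.exp_one_lt_d9
  have h7 : Real.exp (2:ℝ) = Real.exp 1 * Real.exp 1 := by
    rw [← Real.exp_add]; norm_num
  rw [h7]; nlinarith [Real.exp_pos 1]

/-- The main numeric inequality used after Markov. -/
lemma numeric_main {y : ℝ} (hy : 2 ≤ y) :
    Real.exp (3/16 * y) ≤ Real.exp (1/4 - y/8) * Real.cosh (y/2) := by
  have key : (2:ℝ) ≤ Real.exp (1/4 + 3*y/16) + Real.exp (1/4 - 13*y/16) := by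
    rcases le_or_gt (12/5 : ℝ) y with h | h
    · have h1 : Real.exp ((7:ℝ)/10) ≤ Real.exp (1/4 + 3*y/16) :=
        Real.exp_le_exp.2 (by linarith)
      have := two_le_exp_seven_tenths
      have := (Real.exp_pos (1/4 - 13*y/16)).le
      linarith
    · have h1 : Real.exp ((5:ℝ)/8) ≤ Real.exp (1/4 + 3*y/16) :=
        Real.exp_le_exp.2 (by linarith)
      have h2 : Real.exp (-(17/10) : ℝ) ≤ Real.exp (1/4 - 13*y/16) :=
        Real.exp_le_exp.2 (by linarith)
      have h3 : (183569/98304:ℝ) ≤ Real.exp ((5:ℝ)/8) := by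
        have h := Real.sum_le_exp_of_nonneg (x := (5/8:ℝ)) (by norm_num) 5
        have : ∑ i ∈ Finset.range 5, ((5:ℝ)/8) ^ i / i.factorial = 183569/98304 := by
          simp [Finset.sum_range_succ, Nat.factorial]
          norm_num
        rw [this] at h
        linarith
      have h4 : (3/20 : ℝ) ≤ Real.exp (-(17/10) : ℝ) := by
        rw [Real.exp_neg]
        have h5 : Real.exp ((17:ℝ)/10) * Real.exp ((3:ℝ)/10) = Real.exp 2 := by
          rw [← Real.exp_add]; norm_num
        have h6 : (13:ℝ)/10 ≤ Real.exp ((3:ℝ)/10) := by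
          have := Real.add_one_le_exp ((3:ℝ)/10)
          linarith
        have h8 : Real.exp ((17:ℝ)/10) ≤ 20/3 := by
          nlinarith [Real.exp_pos ((17:ℝ)/10), Real.exp_pos ((3:ℝ)/10), exp_two_lt]
        have hpos := Real.exp_pos ((17:ℝ)/10)
        have h9 : ((20:ℝ)/3)⁻¹ ≤ (Real.exp ((17:ℝ)/10))⁻¹ := by
          apply inv_anti₀ hpos h8
        norm_num at h9 ⊢
        linarith
      linarith
  have hmul := mul_le_mul_of_nonneg_right key (Real.exp_pos (3/16 * y)).le
  rw [add_mul, ← Real.exp_add, ← Real.exp_add] at hmul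
  rw [Real.cosh_eq]
  have e1 : 1/4 + 3*y/16 + 3/16*y = (1/4 - y/8) + y/2 := by ring
  have e2 : 1/4 - 13*y/16 + 3/16*y = (1/4 - y/8) + -(y/2) := by ring
  rw [e1, e2, Real.exp_add, Real.exp_add] at hmul
  have expand : Real.exp (1/4 - y/8) * ((Real.exp (y/2) + Real.exp (-(y/2)))/2)
      = (Real.exp (1/4 - y/8) * Real.exp (-(y/2)) + Real.exp (1/4 - y/8) * Real.exp (y/2))/2 := by
    ring
  rw [expand]
  linarith

/-- Markov for nonnegative integrable functions, `ofReal` form. -/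
lemma markov_ofReal {Ω : Type*} [MeasurableSpace Ω] (μ : Measure Ω) [IsProbabilityMeasure μ]
    {f : Ω → ℝ} (hmeas : Measurable f) (hint : Integrable f μ) (hnn : 0 ≤ f)
    {c : ℝ} (hc : 0 < c) :
    μ {ω | c ≤ f ω} ≤ ENNReal.ofReal ((∫ ω, f ω ∂μ) / c) := by
  have h1 : μ {ω | c ≤ f ω} ≤ μ {ω | ENNReal.ofReal c ≤ ENNReal.ofReal (f ω)} := by
    apply measure_mono
    intro ω hω
    exact ENNReal.ofReal_le_ofReal hω
  have h2 := mul_meas_ge_le_lintegral₀ (μ := μ) (f := fun ω => ENNReal.ofReal (f ω))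
    (hmeas.ennreal_ofReal.aemeasurable) (ENNReal.ofReal c)
  have h3 : ∫⁻ ω, ENNReal.ofReal (f ω) ∂μ = ENNReal.ofReal (∫ ω, f ω ∂μ) :=
    (ofReal_integral_eq_lintegral_ofReal hint (Filter.Eventually.of_forall hnn)).symm
  have hc0 : ENNReal.ofReal c ≠ 0 := by
    simp [ENNReal.ofReal_eq_zero]; linarith
  have hcT : ENNReal.ofReal c ≠ ⊤ := ENNReal.ofReal_ne_top
  calc μ {ω | c ≤ f ω} ≤ μ {ω | ENNReal.ofReal c ≤ ENNReal.ofReal (f ω)} := h1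
    _ ≤ (∫⁻ ω, ENNReal.ofReal (f ω) ∂μ) / ENNReal.ofReal c := by
        rw [ENNReal.le_div_iff_mul_le (Or.inl hc0) (Or.inl hcT), mul_comm]
        exact h2
    _ = ENNReal.ofReal (∫ ω, f ω ∂μ) / ENNReal.ofReal c := by rw [h3]
    _ = ENNReal.ofReal ((∫ ω, f ω ∂μ) / c) := (ENNReal.ofReal_div_of_pos hc).symm
section Main
open scoped ENNReal

theorem stmt_14 {Ω : Type*} [MeasurableSpace Ω] (μ : Measure Ω) [IsProbabilityMeasure μ]
    (N k : ℕ) (v : Fin N → Ω → EuclideanSpace ℝ (Fin k))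
    (hmeas : ∀ i, Measurable (v i))
    (hint : ∀ i, Integrable (v i) μ)
    (hindep : iIndepFun v μ)
    (B : ℝ) (hB : 0 < B)
    (hbound : ∀ i, ∀ᵐ ω ∂μ, ‖v i ω - ∫ ω', v i ω' ∂μ‖ ≤ B)
    (σ2 : ℝ) (hσ2 : σ2 = ∑ i, ∫ ω, ‖v i ω - ∫ ω', v i ω' ∂μ‖ ^ 2 ∂μ)
    (t : ℝ) (ht0 : 0 ≤ t) (ht : t ≤ σ2 / B) :
    μ {ω | ‖∑ i, (v i ω - ∫ ω', v i ω' ∂μ)‖ > t} ≤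
      ENNReal.ofReal (Real.exp (-(t ^ 2) / (8 * σ2) + 1 / 4)) := by
  classical
  set X : Fin N → Ω → EuclideanSpace ℝ (Fin k) :=
    fun i ω => v i ω - ∫ ω', v i ω' ∂μ with hX_def
  have hXmeas : ∀ i, Measurable (X i) := fun i => (hmeas i).sub measurable_const
  have hXindep : iIndepFun X μ := by
    have h := hindep.comp (fun i (y : EuclideanSpace ℝ (Fin k)) => y - ∫ ω', v i ω' ∂μ)
      (fun i => measurable_id.sub measurable_const)
    exact h
  have hXbound : ∀ i, ∀ᵐ ω ∂μ, ‖X i ω‖ ≤ B := hbound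
  have hXmean : ∀ i, ∫ ω, X i ω ∂μ = 0 := by
    intro i
    have : ∫ ω, X i ω ∂μ = (∫ ω, v i ω ∂μ) - ∫ _ω, (∫ ω', v i ω' ∂μ) ∂μ :=
      integral_sub (hint i) (integrable_const _)
    rw [this, integral_const]
    simp [measure_univ]
  have hσnn : 0 ≤ σ2 := by
    rw [hσ2]
    apply Finset.sum_nonneg
    intro i _
    exact integral_nonneg (fun ω => by positivity)
  have hσ2' : σ2 = ∑ i, ∫ ω, ‖X i ω‖ ^ 2 ∂μ := hσ2
  have hgoal_set : {ω | ‖∑ i, (v i ω - ∫ ω', v i ω' ∂μ)‖ > t}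
      = {ω | ‖∑ i, X i ω‖ > t} := rfl
  rw [hgoal_set]
  rcases le_or_gt (t ^ 2) (2 * σ2) with hcase | hcase
  · -- trivial case: the bound is at least 1
    have h2 : (1 : ℝ) ≤ Real.exp (-(t ^ 2) / (8 * σ2) + 1 / 4) := by
      apply Real.one_le_exp
      rcases eq_or_lt_of_le hσnn with h0 | h0
      · have ht2 : t = 0 := by nlinarith
        rw [ht2, ← h0]
        norm_num
      · have hd : t ^ 2 / (8 * σ2) ≤ 1 / 4 := by
          rw [div_le_iff₀ (by linarith)]
          nlinarith
        have hdiv : -(t ^ 2) / (8 * σ2) = -(t ^ 2 / (8 * σ2)) := by ring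
        rw [hdiv]
        linarith
    calc μ {ω | ‖∑ i, X i ω‖ > t} ≤ 1 := prob_le_one
      _ = ENNReal.ofReal 1 := by simp
      _ ≤ ENNReal.ofReal (Real.exp (-(t ^ 2) / (8 * σ2) + 1 / 4)) :=
          ENNReal.ofReal_le_ofReal h2
  · -- main case
    have hσpos : 0 < σ2 := by
      rcases eq_or_lt_of_le hσnn with h0 | h0
      · exfalso
        rw [← h0] at ht
        simp only [zero_div] at ht
        have ht' : t = 0 := le_antisymm ht ht0
        rw [ht', ← h0] at hcase
        norm_num at hcase
      · exact h0
    have htpos : 0 < t := by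
      rcases eq_or_lt_of_le ht0 with h0 | h0
      · exfalso; rw [← h0] at hcase; nlinarith
      · exact h0
    set L : ℝ := t / (2 * σ2) with hL_def
    have hLpos : 0 < L := by positivity
    have hLB : L * B ≤ 1 := by
      have h1 : t * B ≤ σ2 := by
        have := mul_le_mul_of_nonneg_right ht hB.le
        calc t * B ≤ (σ2 / B) * B := this
          _ = σ2 := by field_simp
      rw [hL_def, div_mul_eq_mul_div, div_le_one (by positivity)]
      nlinarith
    -- MGF bound
    have hmgf := mgf_sum_bound μ X hXmeas hXindep hB.le hLpos.le hLB hXbound hXmean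
      Finset.univ
    rw [← hσ2'] at hmgf
    -- measurability and integrability
    set S : Ω → EuclideanSpace ℝ (Fin k) := fun ω => ∑ i, X i ω with hS_def
    have hSmeas : Measurable S := Finset.measurable_sum _ (fun i _ => hXmeas i)
    have hfmeas : Measurable (fun ω => Real.cosh (L * ‖S ω‖)) := by
      have hc : Continuous (fun x : EuclideanSpace ℝ (Fin k) => Real.cosh (L * ‖x‖)) := by
        fun_prop
      exact hc.measurable.comp hSmeas
    have hSbound : ∀ᵐ ω ∂μ, ‖S ω‖ ≤ N * B := by
      have hball : ∀ᵐ ω ∂μ, ∀ i ∈ Finset.univ (α := Fin N), ‖X i ω‖ ≤ B :=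
        (ae_ball_iff (Finset.univ (α := Fin N)).countable_toSet).2 (fun i _ => hXbound i)
      filter_upwards [hball] with ω hω
      calc ‖S ω‖ ≤ ∑ i, ‖X i ω‖ := norm_sum_le _ _
        _ ≤ ∑ _i : Fin N, B := Finset.sum_le_sum hω
        _ = N * B := by simp [Finset.sum_const, nsmul_eq_mul]
    have hfint : Integrable (fun ω => Real.cosh (L * ‖S ω‖)) μ := by
      refine ⟨hfmeas.aestronglyMeasurable, ?_⟩
      apply HasFiniteIntegral.of_bounded (C := Real.cosh (L * (N * B)))
      filter_upwards [hSbound] with ω hω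
      rw [Real.norm_eq_abs, abs_of_pos (Real.cosh_pos _)]
      apply Real.cosh_le_cosh.2
      rw [abs_of_nonneg (by positivity), abs_of_nonneg (by positivity)]
      exact mul_le_mul_of_nonneg_left hω hLpos.le
    have hfnn : (0 : Ω → ℝ) ≤ fun ω => Real.cosh (L * ‖S ω‖) :=
      fun ω => (Real.cosh_pos _).le
    -- Markov
    have hsubset : {ω | ‖S ω‖ > t} ⊆ {ω | Real.cosh (L * t) ≤ Real.cosh (L * ‖S ω‖)} := by
      intro ω hω
      simp only [Set.mem_setOf_eq] at hω ⊢
      apply Real.cosh_le_cosh.2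
      rw [abs_of_nonneg (by positivity), abs_of_nonneg (by positivity)]
      exact mul_le_mul_of_nonneg_left hω.le hLpos.le
    have hmarkov := markov_ofReal μ hfmeas hfint hfnn (Real.cosh_pos (L * t))
    -- final numeric step
    have hfinal : (∫ ω, Real.cosh (L * ‖S ω‖) ∂μ) / Real.cosh (L * t) ≤
        Real.exp (-(t ^ 2) / (8 * σ2) + 1 / 4) := by
      have hy : (2 : ℝ) ≤ t ^ 2 / σ2 := by
        rw [le_div_iff₀ hσpos]; linarith
      have hnum := numeric_main hy
      have e3 : 3 / 4 * L ^ 2 * σ2 = 3 / 16 * (t ^ 2 / σ2) := by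
        rw [hL_def]; field_simp; ring
      have e4 : L * t = (t ^ 2 / σ2) / 2 := by
        rw [hL_def]; field_simp
      have e5 : 1 / 4 - (t ^ 2 / σ2) / 8 = -(t ^ 2) / (8 * σ2) + 1 / 4 := by
        field_simp; ring
      rw [div_le_iff₀ (Real.cosh_pos _)]
      calc ∫ ω, Real.cosh (L * ‖S ω‖) ∂μ ≤ Real.exp (3 / 4 * L ^ 2 * σ2) := hmgf
        _ = Real.exp (3 / 16 * (t ^ 2 / σ2)) := by rw [e3]
        _ ≤ Real.exp (1 / 4 - (t ^ 2 / σ2) / 8) * Real.cosh ((t ^ 2 / σ2) / 2) := hnum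
        _ = Real.exp (-(t ^ 2) / (8 * σ2) + 1 / 4) * Real.cosh (L * t) := by
            rw [e4, e5]
    calc μ {ω | ‖∑ i, X i ω‖ > t}
        ≤ μ {ω | Real.cosh (L * t) ≤ Real.cosh (L * ‖S ω‖)} := measure_mono hsubset
      _ ≤ ENNReal.ofReal ((∫ ω, Real.cosh (L * ‖S ω‖) ∂μ) / Real.cosh (L * t)) := hmarkov
      _ ≤ ENNReal.ofReal (Real.exp (-(t ^ 2) / (8 * σ2) + 1 / 4)) :=
          ENNReal.ofReal_le_ofReal hfinal

end Main
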